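/- Let A, B be unitary d×d complex matrices satisfying A·B·A = B·A·B, and assume A has pairwise distinct eigenvalues λ_1, …, λ_d. Then for every i the scalar μ_{1i} is a nonnegative real number. -/

import Mathlib

open Matrix Polynomial

/-- The eigenprojection `e_{M,i} = ∏_{j ≠ i} (M - λ_j·I)/(λ_i - λ_j)` of a matrix `M`
onto the `λ_i`-eigenspace. -/
noncomputable def eigProj {d : ℕ} (lam : Fin d → ℂ)
    (M : Matrix (Fin d) (Fin d) ℂ) (i : Fin d) : Matrix (Fin d) (Fin d) ℂ :=
  (∏ j ∈ Finset.univ.erase i, (lam i - lam j)⁻¹) •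
    Polynomial.aeval M (∏ j ∈ Finset.univ.erase i, (X - C (lam j)))

namespace MuAux

variable {d : ℕ}

/-- aeval at a diagonal matrix. -/
lemma aeval_diagonal (lam : Fin d → ℂ) (p : ℂ[X]) :
    aeval (Matrix.diagonal lam) p = Matrix.diagonal (fun k => p.eval (lam k)) := by
  have h : aeval lam p = fun k => p.eval (lam k) := by
    funext k
    rw [show (aeval lam p) k = aeval (lam k) p from
      (aeval_algHom_apply (Pi.evalAlgHom ℂ _ k) lam p).symm]
    rw [← Polynomial.coe_aeval_eq_eval]
  rw [show Matrix.diagonal lam = Matrix.diagonalAlgHom (n := Fin d) (α := ℂ) ℂ lam from rfl,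
    aeval_algHom_apply, h, Matrix.diagonalAlgHom_apply]

lemma conj_pow (P M W : Matrix (Fin d) (Fin d) ℂ) (h1 : P * W = 1) (h2 : W * P = 1)
    (n : ℕ) : (P * M * W) ^ n = P * M ^ n * W := by
  induction n with
  | zero => simpa using h1.symm
  | succ n ih =>
      rw [pow_succ, ih, pow_succ]
      simp only [Matrix.mul_assoc]
      rw [← Matrix.mul_assoc W P, h2, Matrix.one_mul]

lemma aeval_conj (P M W : Matrix (Fin d) (Fin d) ℂ) (h1 : P * W = 1) (h2 : W * P = 1)
    (p : ℂ[X]) : aeval (P * M * W) p = P * aeval M p * W := by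
  induction p using Polynomial.induction_on' with
  | add p q hp hq =>
      rw [map_add, map_add, hp, hq, Matrix.mul_add, Matrix.add_mul]
  | monomial n a =>
      rw [aeval_monomial, aeval_monomial, conj_pow P M W h1 h2]
      simp [Algebra.algebraMap_eq_smul_one, smul_mul_assoc, Matrix.mul_smul]

lemma conj_mul (P W M N : Matrix (Fin d) (Fin d) ℂ) (h2 : W * P = 1) :
    (P * M * W) * (P * N * W) = P * (M * N) * W := by
  calc (P * M * W) * (P * N * W) = P * M * (W * P) * N * W := by simp only [Matrix.mul_assoc]
    _ = P * (M * N) * W := by rw [h2]; simp only [Matrix.mul_assoc, Matrix.mul_one, Matrix.one_mul]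

/-- the key computation: the eigenprojection of a diagonalized matrix. -/
lemma eigProj_conj (lam : Fin d → ℂ) (hinj : Function.Injective lam)
    (P W : Matrix (Fin d) (Fin d) ℂ) (h1 : P * W = 1) (h2 : W * P = 1) (i : Fin d) :
    eigProj lam (P * Matrix.diagonal lam * W) i
      = P * Matrix.diagonal (Pi.single i 1) * W := by
  rw [eigProj, aeval_conj P _ W h1 h2, aeval_diagonal]
  have hval : ∀ k, (∏ j ∈ Finset.univ.erase i, (X - C (lam j))).eval (lam k)
      = ∏ j ∈ Finset.univ.erase i, (lam k - lam j) := by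
    intro k; rw [Polynomial.eval_prod]; simp
  have hdiag : Matrix.diagonal (fun k => (∏ j ∈ Finset.univ.erase i,
        (X - C (lam j))).eval (lam k))
      = (∏ j ∈ Finset.univ.erase i, (lam i - lam j)) • Matrix.diagonal (Pi.single i 1) := by
    rw [← Matrix.diagonal_smul]
    refine congrArg Matrix.diagonal (funext fun k => ?_)
    by_cases hk : k = i
    · subst hk; rw [hval]; simp
    · rw [hval, Finset.prod_eq_zero (Finset.mem_erase.mpr ⟨hk, Finset.mem_univ k⟩)
        (sub_self (lam k))]
      simp [Pi.single_eq_of_ne hk]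
  rw [Matrix.mul_assoc, ← Matrix.mul_smul, ← Matrix.smul_mul, hdiag, smul_smul]
  rw [← Finset.prod_mul_distrib]
  have : (∏ j ∈ Finset.univ.erase i, ((lam i - lam j)⁻¹ * (lam i - lam j))) = 1 := by
    apply Finset.prod_eq_one
    intro j hj
    have : j ≠ i := Finset.ne_of_mem_erase hj
    exact inv_mul_cancel₀ (sub_ne_zero.mpr fun h => this (hinj h.symm))
  rw [this, one_smul, Matrix.mul_assoc]

lemma conjTranspose_aeval (M : Matrix (Fin d) (Fin d) ℂ) (p : ℂ[X]) :
    (aeval M p)ᴴ = aeval Mᴴ (p.map (starRingEnd ℂ)) := by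
  induction p using Polynomial.induction_on' with
  | add p q hp hq => rw [map_add, Matrix.conjTranspose_add, hp, hq, Polynomial.map_add, map_add]
  | monomial n a =>
      rw [aeval_monomial, Polynomial.map_monomial, aeval_monomial,
        Algebra.algebraMap_eq_smul_one, Algebra.algebraMap_eq_smul_one,
        smul_mul_assoc, Matrix.one_mul, smul_mul_assoc, Matrix.one_mul,
        Matrix.conjTranspose_smul, Matrix.conjTranspose_pow, starRingEnd_apply]

lemma eigProj_conjTranspose (lam : Fin d → ℂ) (M : Matrix (Fin d) (Fin d) ℂ) (i : Fin d) :
    (eigProj lam M i)ᴴ = eigProj (fun j => starRingEnd ℂ (lam j)) Mᴴ i := by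
  rw [eigProj, Matrix.conjTranspose_smul, conjTranspose_aeval, eigProj]
  congr 1
  · simp [map_prod]
  · congr 1
    rw [Polynomial.map_prod]
    congr 1
    funext j
    simp

open scoped ComplexOrder in
lemma dot_ne (v : Fin d → ℂ) (hv : v ≠ 0) : star v ⬝ᵥ v ≠ 0 := by
  intro h
  exact hv ((dotProduct_star_self_eq_zero).mp h)

end MuAux

open MuAux in
theorem mu_nonneg_of_unitary {d : ℕ} (hd : 1 ≤ d)
    (A B : Matrix (Fin d) (Fin d) ℂ)
    (hAu : A ∈ Matrix.unitaryGroup (Fin d) ℂ)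
    (hBu : B ∈ Matrix.unitaryGroup (Fin d) ℂ)
    (hbraid : A * B * A = B * A * B)
    (lam : Fin d → ℂ) (hinj : Function.Injective lam)
    (P : Matrix (Fin d) (Fin d) ℂ) (hP : IsUnit P)
    (hdiag : A = P * Matrix.diagonal lam * P⁻¹)
    (μ : Fin d → Fin d → ℂ)
    (hμ : ∀ i j, eigProj lam B i * eigProj lam A j * eigProj lam B i
        = μ i j • eigProj lam B i) :
    ∀ i, ∃ r : ℝ, 0 ≤ r ∧ μ (⟨0, hd⟩ : Fin d) i = (r : ℂ) := by
  intro i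
  set i0 : Fin d := ⟨0, hd⟩
  have hPdet : IsUnit P.det := (Matrix.isUnit_iff_isUnit_det P).mp hP
  have hP1 : P * P⁻¹ = 1 := Matrix.mul_nonsing_inv P hPdet
  have hP2 : P⁻¹ * P = 1 := Matrix.nonsing_inv_mul P hPdet
  have hA1 : star A * A = 1 := hAu.1
  have hA2 : A * star A = 1 := hAu.2
  have hB1 : star B * B = 1 := hBu.1
  have hB2 : B * star B = 1 := hBu.2
  -- eigenvalues have modulus one
  have hmod : ∀ j, starRingEnd ℂ (lam j) * lam j = 1 := by
    intro j
    set v : Fin d → ℂ := fun k => P k j with hv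
    have hvec : A *ᵥ v = lam j • v := by
      funext k
      have := congrArg (fun M => M k j)
        (by rw [hdiag, Matrix.mul_assoc (P * Matrix.diagonal lam), hP2, Matrix.mul_one] :
          A * P = P * Matrix.diagonal lam)
      simpa [Matrix.mul_apply, Matrix.mulVec, dotProduct,
        Matrix.diagonal_apply, Finset.mul_sum, mul_comm] using this
    have hvne : v ≠ 0 := by
      intro h0
      have hcol : P *ᵥ Pi.single j 1 = v := by
        funext k; simp [Matrix.mulVec_single, hv]
      have hz : P⁻¹ *ᵥ (P *ᵥ Pi.single j 1) = 0 := by rw [hcol, h0, Matrix.mulVec_zero]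
      rw [Matrix.mulVec_mulVec, hP2, Matrix.one_mulVec] at hz
      simpa using congrFun hz j
    have hdot : star v ⬝ᵥ v ≠ 0 := dot_ne v hvne
    have key : (starRingEnd ℂ (lam j) * lam j) * (star v ⬝ᵥ v) = 1 * (star v ⬝ᵥ v) := by
      have h1 : star (A *ᵥ v) ⬝ᵥ (A *ᵥ v) = star v ⬝ᵥ v := by
        rw [Matrix.star_mulVec, Matrix.dotProduct_mulVec, Matrix.vecMul_vecMul,
          show Aᴴ = star A from rfl, hA1, Matrix.vecMul_one]
      rw [hvec, star_smul, smul_dotProduct, dotProduct_smul, smul_smul, smul_eq_mul] at h1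
      rw [one_mul]
      exact h1
    exact mul_right_cancel₀ hdot key
  -- conjugate eigenvalues
  have hclam : Function.Injective (fun j => starRingEnd ℂ (lam j)) := fun a b hab =>
    hinj ((starRingEnd ℂ).injective hab)
  have hDDc : Matrix.diagonal (fun j => starRingEnd ℂ (lam j)) * Matrix.diagonal lam = 1 := by
    rw [Matrix.diagonal_mul_diagonal,
      show (fun j => starRingEnd ℂ (lam j) * lam j) = fun _ => (1 : ℂ) from funext hmod,
      Matrix.diagonal_one]
  have hDcD : Matrix.diagonal lam * Matrix.diagonal (fun j => starRingEnd ℂ (lam j)) = 1 := by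
    rw [Matrix.diagonal_mul_diagonal,
      show (fun j => lam j * starRingEnd ℂ (lam j)) = fun _ => (1 : ℂ) from
        funext fun k => by rw [mul_comm]; exact hmod k,
      Matrix.diagonal_one]
  have hstarA : star A = P * Matrix.diagonal (fun j => starRingEnd ℂ (lam j)) * P⁻¹ := by
    have hAc : A * (P * Matrix.diagonal (fun j => starRingEnd ℂ (lam j)) * P⁻¹) = 1 := by
      rw [hdiag, conj_mul P P⁻¹ _ _ hP2, hDcD, Matrix.mul_one, hP1]
    calc star A = star A * (A * (P * Matrix.diagonal (fun j => starRingEnd ℂ (lam j)) * P⁻¹)) := by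
          rw [hAc, Matrix.mul_one]
      _ = (star A * A) * (P * Matrix.diagonal (fun j => starRingEnd ℂ (lam j)) * P⁻¹) := by
          simp only [Matrix.mul_assoc]
      _ = P * Matrix.diagonal (fun j => starRingEnd ℂ (lam j)) * P⁻¹ := by
          rw [hA1, Matrix.one_mul]
  -- B is diagonalized by Q = A*B*P with inverse W = P⁻¹ * star B * star A
  set Q : Matrix (Fin d) (Fin d) ℂ := A * B * P with hQ
  set W : Matrix (Fin d) (Fin d) ℂ := P⁻¹ * star B * star A with hW
  have hQ1 : Q * W = 1 := by
    rw [hQ, hW]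
    calc A * B * P * (P⁻¹ * star B * star A)
        = A * B * (P * P⁻¹) * star B * star A := by simp only [Matrix.mul_assoc]
      _ = A * (B * star B) * star A := by
          rw [hP1]; simp only [Matrix.mul_assoc, Matrix.one_mul]
      _ = 1 := by rw [hB2, Matrix.mul_one, hA2]
  have hQ2 : W * Q = 1 := by
    rw [hQ, hW]
    calc P⁻¹ * star B * star A * (A * B * P)
        = P⁻¹ * star B * (star A * A) * B * P := by simp only [Matrix.mul_assoc]
      _ = P⁻¹ * (star B * B) * P := by
          rw [hA1]; simp only [Matrix.mul_assoc, Matrix.one_mul, Matrix.mul_one]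
      _ = 1 := by rw [hB1, Matrix.mul_one, hP2]
  have e1 : B * A * B * star B * star A = B := by
    calc B * A * B * star B * star A = B * A * (B * star B) * star A := by
          rw [Matrix.mul_assoc (B * A)]
      _ = B * (A * star A) := by rw [hB2, Matrix.mul_one, Matrix.mul_assoc]
      _ = B := by rw [hA2, Matrix.mul_one]
  have e2 : A * B * A * star B * star A = Q * Matrix.diagonal lam * W := by
    rw [hQ, hW]
    conv_lhs => rw [show A * B * A = A * B * (P * Matrix.diagonal lam * P⁻¹) from by
      rw [← hdiag]]
    simp only [Matrix.mul_assoc]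
  have e3 : A * B * A * star B * star A = B := by rw [hbraid]; exact e1
  have hBdiag : B = Q * Matrix.diagonal lam * W := e3.symm.trans e2
  have hstarB : star B = Q * Matrix.diagonal (fun j => starRingEnd ℂ (lam j)) * W := by
    have hBc : B * (Q * Matrix.diagonal (fun j => starRingEnd ℂ (lam j)) * W) = 1 := by
      rw [hBdiag, conj_mul Q W _ _ hQ2, hDcD, Matrix.mul_one, hQ1]
    calc star B = star B * (B * (Q * Matrix.diagonal (fun j => starRingEnd ℂ (lam j)) * W)) := by
          rw [hBc, Matrix.mul_one]
      _ = (star B * B) * (Q * Matrix.diagonal (fun j => starRingEnd ℂ (lam j)) * W) := by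
          simp only [Matrix.mul_assoc]
      _ = Q * Matrix.diagonal (fun j => starRingEnd ℂ (lam j)) * W := by
          rw [hB1, Matrix.one_mul]
  -- the eigenprojections
  have heA : eigProj lam A i = P * Matrix.diagonal (Pi.single i 1) * P⁻¹ := by
    rw [hdiag]; exact eigProj_conj lam hinj P P⁻¹ hP1 hP2 i
  have heB : eigProj lam B i0 = Q * Matrix.diagonal (Pi.single i0 1) * W := by
    rw [hBdiag]; exact eigProj_conj lam hinj Q W hQ1 hQ2 i0
  have heAH : (eigProj lam A i)ᴴ = eigProj lam A i := by
    rw [eigProj_conjTranspose, show Aᴴ = star A from rfl, hstarA,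
      eigProj_conj _ hclam P P⁻¹ hP1 hP2 i, heA]
  have heBH : (eigProj lam B i0)ᴴ = eigProj lam B i0 := by
    rw [eigProj_conjTranspose, show Bᴴ = star B from rfl, hstarB,
      eigProj_conj _ hclam Q W hQ1 hQ2 i0, heB]
  have hsingle : ∀ (k l : Fin d), (Pi.single k 1 : Fin d → ℂ) l * (Pi.single k 1 : Fin d → ℂ) l = (Pi.single k 1 : Fin d → ℂ) l := by
    intro k l
    by_cases hl : l = k
    · subst hl; simp
    · simp [Pi.single_eq_of_ne hl]
  have heA2 : eigProj lam A i * eigProj lam A i = eigProj lam A i := by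
    rw [heA, conj_mul P P⁻¹ _ _ hP2, Matrix.diagonal_mul_diagonal,
      show (fun l => (Pi.single i 1 : Fin d → ℂ) l * (Pi.single i 1 : Fin d → ℂ) l)
        = (Pi.single i 1 : Fin d → ℂ) from funext (hsingle i)]
  -- trace of e_B is 1
  have htr : Matrix.trace (eigProj lam B i0) = 1 := by
    rw [heB, Matrix.trace_mul_comm (Q * Matrix.diagonal (Pi.single i0 1)) W,
      ← Matrix.mul_assoc, hQ2, Matrix.one_mul, Matrix.trace_diagonal]
    simp
  -- assemble
  set N : Matrix (Fin d) (Fin d) ℂ := eigProj lam B i0 * eigProj lam A i with hN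
  have hNH : Nᴴ = eigProj lam A i * eigProj lam B i0 := by
    rw [hN, Matrix.conjTranspose_mul, heAH, heBH]
  have hNN : N * Nᴴ = μ i0 i • eigProj lam B i0 := by
    rw [hNH, hN]
    calc (eigProj lam B i0 * eigProj lam A i) * (eigProj lam A i * eigProj lam B i0)
        = eigProj lam B i0 * (eigProj lam A i * eigProj lam A i) * eigProj lam B i0 := by
          simp only [Matrix.mul_assoc]
      _ = eigProj lam B i0 * eigProj lam A i * eigProj lam B i0 := by rw [heA2]
      _ = μ i0 i • eigProj lam B i0 := hμ i0 i
  have htrace : Matrix.trace (N * Nᴴ) = μ i0 i := by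
    rw [hNN, Matrix.trace_smul, htr, smul_eq_mul, mul_one]
  refine ⟨∑ k, ∑ l, Complex.normSq (N k l),
    Finset.sum_nonneg fun _ _ => Finset.sum_nonneg fun _ _ => Complex.normSq_nonneg _, ?_⟩
  rw [← htrace]
  have hts : Matrix.trace (N * Nᴴ) = ∑ k, ∑ l, (Complex.normSq (N k l) : ℂ) := by
    simp [Matrix.trace, Matrix.diag, Matrix.mul_apply, Matrix.conjTranspose_apply,
      Complex.mul_conj]
  rw [hts]
  push_cast
  rfl
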